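/- Let f : ℝⁿ → ℝ and γ : [0,T] → ℝⁿ a differentiable solution of ẋ = e with f ∘ γ differentiable. Suppose for all x satisfying P with f(x) = 0, the Lie derivative of f along e at x is strictly positive. If γ(t) satisfies P for all t ∈ [0,T] and f(γ(0)) ≥ 0, then f(γ(t)) ≥ 0 for all t ∈ [0,T]. -/

import Mathlib

open InnerProductSpace

/-- Soundness of the barrier certificate rule (bc). -/
theorem barrier_certificate {n : ℕ}
    (e : EuclideanSpace ℝ (Fin n) → EuclideanSpace ℝ (Fin n))
    (f : EuclideanSpace ℝ (Fin n) → ℝ) (P : EuclideanSpace ℝ (Fin n) → Prop)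
    (γ : ℝ → EuclideanSpace ℝ (Fin n)) (T : ℝ) (hT : 0 ≤ T)
    (hf : Differentiable ℝ f)
    (hγ : ∀ t ∈ Set.Icc (0:ℝ) T, HasDerivAt γ (e (γ t)) t)
    (hlie : ∀ x, P x → f x = 0 → ⟪gradient f x, e x⟫_ℝ > 0)
    (hP : ∀ t ∈ Set.Icc (0:ℝ) T, P (γ t))
    (h0 : f (γ 0) ≥ 0) :
    ∀ t ∈ Set.Icc (0:ℝ) T, f (γ t) ≥ 0 := by
  by_contra h
  push_neg at h
  obtain ⟨t', ht', hlt⟩ := h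
  set g : ℝ → ℝ := fun t => f (γ t) with hgdef
  have hgd : ∀ t ∈ Set.Icc (0:ℝ) T,
      HasDerivAt g (⟪gradient f (γ t), e (γ t)⟫_ℝ) t := by
    intro t ht
    have h1 : HasGradientAt f (gradient f (γ t)) (γ t) :=
      (hf (γ t)).hasGradientAt
    have h2 := h1.hasFDerivAt.comp_hasDerivAt t (hγ t ht)
    have h3 : HasDerivAt g _ t := h2
    simpa using h3
  have hgc : ContinuousOn g (Set.Icc 0 T) := fun t ht =>
    (hgd t ht).continuousAt.continuousWithinAt
  have hsub : Set.Icc (0:ℝ) t' ⊆ Set.Icc 0 T :=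
    Set.Icc_subset_Icc le_rfl ht'.2
  set S : Set ℝ := Set.Icc (0:ℝ) t' ∩ {t | 0 ≤ g t} with hSdef
  have hS0 : (0:ℝ) ∈ S := ⟨⟨le_rfl, ht'.1⟩, h0⟩
  have hSbdd : BddAbove S := ⟨t', fun x hx => hx.1.2⟩
  have hSclosed : IsClosed S := by
    have : IsClosed (Set.Icc (0:ℝ) t' ∩ g ⁻¹' Set.Ici 0) :=
      (hgc.mono hsub).preimage_isClosed_of_isClosed isClosed_Icc isClosed_Ici
    simpa [hSdef, Set.preimage, Set.mem_Ici] using this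
  set s : ℝ := sSup S with hsdef
  have hsS : s ∈ S := hSclosed.csSup_mem ⟨0, hS0⟩ hSbdd
  have hsIcc : s ∈ Set.Icc (0:ℝ) t' := hsS.1
  have hgs_nonneg : 0 ≤ g s := hsS.2
  have hst' : s < t' := lt_of_le_of_ne hsIcc.2 (by
    intro hEq
    rw [hEq] at hgs_nonneg
    exact absurd hgs_nonneg (not_le.mpr hlt))
  have hsT : s ∈ Set.Icc (0:ℝ) T := hsub hsIcc
  have hneg : ∀ t ∈ Set.Ioc s t', g t < 0 := by
    intro t ht
    by_contra hge
    push_neg at hge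
    have : t ∈ S := ⟨⟨hsIcc.1.trans ht.1.le, ht.2⟩, hge⟩
    exact absurd (le_csSup hSbdd this) (not_le.mpr ht.1)
  have hds := hgd s hsT
  have hmem : Set.Ioc s t' ∈ nhdsWithin s (Set.Ioi s) := by
    rw [← Set.Ioi_inter_Iic]
    exact inter_mem_nhdsWithin _ (Iic_mem_nhds hst')
  have hev : ∀ᶠ t in nhdsWithin s (Set.Ioi s), g t ≤ 0 :=
    Filter.eventually_of_mem hmem fun t ht => (hneg t ht).le
  -- g s = 0
  have hgs0 : g s = 0 := by
    have htend : Filter.Tendsto g (nhdsWithin s (Set.Ioi s)) (nhds (g s)) :=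
      hds.continuousAt.continuousWithinAt
    exact le_antisymm (le_of_tendsto htend hev) hgs_nonneg
  have hd_pos : (0:ℝ) < ⟪gradient f (γ s), e (γ s)⟫_ℝ :=
    hlie (γ s) (hP s hsT) hgs0
  -- slope argument
  have hslope : Filter.Tendsto (slope g s) (nhdsWithin s {s}ᶜ)
      (nhds (⟪gradient f (γ s), e (γ s)⟫_ℝ)) :=
    hasDerivAt_iff_tendsto_slope.mp hds
  have hslope' : Filter.Tendsto (slope g s) (nhdsWithin s (Set.Ioi s))
      (nhds (⟪gradient f (γ s), e (γ s)⟫_ℝ)) :=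
    hslope.mono_left (nhdsWithin_mono s fun x hx => ne_of_gt hx)
  have hev2 : ∀ᶠ t in nhdsWithin s (Set.Ioi s), slope g s t ≤ 0 :=
    Filter.eventually_of_mem hmem fun t ht => by
      have h1 : g t < 0 := hneg t ht
      have h2 : 0 < t - s := sub_pos.mpr ht.1
      rw [slope_def_field]
      simp only [div_nonpos_iff]
      exact Or.inr ⟨by linarith, by linarith⟩
  have : ⟪gradient f (γ s), e (γ s)⟫_ℝ ≤ 0 := le_of_tendsto hslope' hev2
  linarith
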